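/- Assume g : ℝ → ℝ is measurable with g = 0 on (0,∞) and g ≤ 0 nondecreasing on (−∞,0], and h : ℝ → ℝ is positive and nondecreasing. For A > 0 define Ψ₀(A) := ∫_{(A,∞)} Π(du) ∫_0^{u−A} e^{−Φy} g(y+A−u) dy + ∫_0^∞ e^{−Φy} h(y+A) dy, and assume both integrals converge absolutely for every A > 0. Then Ψ₀ is nondecreasing on (0,∞); if moreover h is strictly increasing, then Ψ₀ is strictly increasing on (0,∞), and consequently there exists at most one A* > 0 with Ψ₀(A*) = 0. -/

import Mathlib

open MeasureTheory Real Set Filter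

/-- The function `Ψ₀` of the capital-reinforcement problem:
`Ψ₀(A) = ∫_{(A,∞)} ν(du) ∫_0^{u−A} e^{−Φy} g(y+A−u) dy + ∫_0^∞ e^{−Φy} h(y+A) dy`. -/
noncomputable def Psi0 (ν : Measure ℝ) (Φ : ℝ) (g h : ℝ → ℝ) (A : ℝ) : ℝ :=
  (∫ u in Set.Ioi A, (∫ y in (0:ℝ)..(u - A), Real.exp (-Φ * y) * g (y + A - u)) ∂ν) +
    ∫ y in Set.Ioi (0:ℝ), Real.exp (-Φ * y) * h (y + A)

/-- Interval integrability of `y ↦ e^{-Φy} g(y - c)` on `[a, b]` when `b ≤ c`. -/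
lemma psi0_aux_ii (Φ : ℝ) (g : ℝ → ℝ) (hΦ : 0 < Φ) (hgm : Measurable g)
    (hgneg : ∀ x ≤ (0:ℝ), g x ≤ 0) (hgmono : MonotoneOn g (Set.Iic 0))
    {a b c : ℝ} (hab : a ≤ b) (hbc : b ≤ c) :
    IntervalIntegrable (fun y => Real.exp (-Φ * y) * g (y - c)) volume a b := by
  rw [intervalIntegrable_iff_integrableOn_Ioc_of_le hab]
  have hmeas : Measurable fun y : ℝ => Real.exp (-Φ * y) * g (y - c) :=
    (Real.measurable_exp.comp (measurable_const.mul measurable_id)).mul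
      (hgm.comp (measurable_id.sub measurable_const))
  refine Integrable.mono' (g := fun _ => Real.exp (-Φ * a) * (-(g (a - c))))
    (integrableOn_const measure_Ioc_lt_top.ne) hmeas.aestronglyMeasurable ?_
  filter_upwards [ae_restrict_mem measurableSet_Ioc] with y hy
  have hy1 : a ≤ y := le_of_lt hy.1
  have hy2 : y ≤ b := hy.2
  have hyc : y - c ≤ 0 := by linarith
  have hac : a - c ≤ 0 := by linarith
  have hgle : g (a - c) ≤ g (y - c) := hgmono hac hyc (by linarith)
  have hgyc : g (y - c) ≤ 0 := hgneg _ hyc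
  have habs : |g (y - c)| ≤ -(g (a - c)) := by
    rw [abs_of_nonpos hgyc]; linarith
  have hexp : Real.exp (-Φ * y) ≤ Real.exp (-Φ * a) :=
    Real.exp_le_exp.2 (by nlinarith)
  rw [Real.norm_eq_abs, abs_mul, abs_of_nonneg (Real.exp_nonneg _)]
  exact mul_le_mul hexp habs (abs_nonneg _) (Real.exp_nonneg _)

/-- The function `s ↦ ∫_0^s e^{-Φ y} g (y - s) dy` is nonincreasing on `[0, ∞)`. -/
lemma psi0_aux_J_anti (Φ : ℝ) (g : ℝ → ℝ) (hΦ : 0 < Φ) (hgm : Measurable g)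
    (hgneg : ∀ x ≤ (0:ℝ), g x ≤ 0) (hgmono : MonotoneOn g (Set.Iic 0))
    {s₁ s₂ : ℝ} (h0 : 0 ≤ s₁) (h12 : s₁ ≤ s₂) :
    (∫ y in (0:ℝ)..s₂, Real.exp (-Φ * y) * g (y - s₂)) ≤
      ∫ y in (0:ℝ)..s₁, Real.exp (-Φ * y) * g (y - s₁) := by
  have i1 : IntervalIntegrable (fun y => Real.exp (-Φ * y) * g (y - s₂)) volume 0 s₁ :=
    psi0_aux_ii Φ g hΦ hgm hgneg hgmono h0 h12
  have i2 : IntervalIntegrable (fun y => Real.exp (-Φ * y) * g (y - s₂)) volume s₁ s₂ :=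
    psi0_aux_ii Φ g hΦ hgm hgneg hgmono h12 le_rfl
  have i3 : IntervalIntegrable (fun y => Real.exp (-Φ * y) * g (y - s₁)) volume 0 s₁ :=
    psi0_aux_ii Φ g hΦ hgm hgneg hgmono h0 le_rfl
  have hsplit :
      (∫ y in (0:ℝ)..s₂, Real.exp (-Φ * y) * g (y - s₂)) =
        (∫ y in (0:ℝ)..s₁, Real.exp (-Φ * y) * g (y - s₂)) +
          ∫ y in s₁..s₂, Real.exp (-Φ * y) * g (y - s₂) :=
    (intervalIntegral.integral_add_adjacent_intervals i1 i2).symm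
  have h2 : (∫ y in s₁..s₂, Real.exp (-Φ * y) * g (y - s₂)) ≤ 0 := by
    rw [intervalIntegral.integral_of_le h12]
    refine setIntegral_nonpos measurableSet_Ioc fun y hy => ?_
    exact mul_nonpos_of_nonneg_of_nonpos (Real.exp_nonneg _) (hgneg _ (by linarith [hy.2]))
  have h1 : (∫ y in (0:ℝ)..s₁, Real.exp (-Φ * y) * g (y - s₂)) ≤
      ∫ y in (0:ℝ)..s₁, Real.exp (-Φ * y) * g (y - s₁) := by
    refine intervalIntegral.integral_mono_on h0 i1 i3 fun y hy => ?_
    refine mul_le_mul_of_nonneg_left ?_ (Real.exp_nonneg _)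
    exact hgmono (Set.mem_Iic.2 (by linarith [hy.1, hy.2])) (Set.mem_Iic.2 (by linarith [hy.1, hy.2])) (by linarith)
  linarith [hsplit, h1, h2]

/-- with `g = 0` on `(0,∞)`, `g ≤ 0` nondecreasing on `(−∞,0]`, and
`h` positive nondecreasing, `Ψ₀` is nondecreasing on `(0,∞)`; if `h` is strictly
increasing then `Ψ₀` is strictly increasing, so it has at most one root `A* > 0`. -/
theorem Psi0_monotone
    (ν : Measure ℝ) (Φ : ℝ) (g h : ℝ → ℝ)
    (hν : ∫⁻ z in Set.Ioi (0:ℝ), ENNReal.ofReal (min 1 (z ^ 2)) ∂ν < ⊤)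
    (hΦ : 0 < Φ)
    (hgm : Measurable g)
    (hg0 : ∀ x > (0:ℝ), g x = 0)
    (hgneg : ∀ x ≤ (0:ℝ), g x ≤ 0)
    (hgmono : MonotoneOn g (Set.Iic 0))
    (hhpos : ∀ x : ℝ, 0 < h x)
    (hhmono : Monotone h)
    (habs1 : ∀ A > (0:ℝ),
      (∫⁻ u in Set.Ioi A,
        (∫⁻ y in Set.Ioo (0:ℝ) (u - A),
          ENNReal.ofReal (Real.exp (-Φ * y) * |g (y + A - u)|)) ∂ν) < ⊤)
    (habs1' : ∀ A > (0:ℝ), IntegrableOn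
      (fun u => ∫ y in (0:ℝ)..(u - A), Real.exp (-Φ * y) * g (y + A - u)) (Set.Ioi A) ν)
    (habs2 : ∀ A > (0:ℝ),
      IntegrableOn (fun y => Real.exp (-Φ * y) * h (y + A)) (Set.Ioi 0)) :
    MonotoneOn (Psi0 ν Φ g h) (Set.Ioi 0)
    ∧ (StrictMono h →
        StrictMonoOn (Psi0 ν Φ g h) (Set.Ioi 0)
        ∧ ∀ A₁ ∈ Set.Ioi (0:ℝ), ∀ A₂ ∈ Set.Ioi (0:ℝ),
            Psi0 ν Φ g h A₁ = 0 → Psi0 ν Φ g h A₂ = 0 → A₁ = A₂) := by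
  -- rewrite the inner integrand: y + A - u = y - (u - A)
  have hrw : ∀ A u : ℝ, (∫ y in (0:ℝ)..(u - A), Real.exp (-Φ * y) * g (y + A - u)) =
      ∫ y in (0:ℝ)..(u - A), Real.exp (-Φ * y) * g (y - (u - A)) := by
    intro A u
    congr 1 with y
    ring_nf
  -- the first term is monotone
  have hT1 : ∀ A₁ ∈ Set.Ioi (0:ℝ), ∀ A₂ ∈ Set.Ioi (0:ℝ), A₁ ≤ A₂ →
      (∫ u in Set.Ioi A₁, (∫ y in (0:ℝ)..(u - A₁), Real.exp (-Φ * y) * g (y + A₁ - u)) ∂ν) ≤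
        ∫ u in Set.Ioi A₂, (∫ y in (0:ℝ)..(u - A₂), Real.exp (-Φ * y) * g (y + A₂ - u)) ∂ν := by
    intro A₁ hA₁ A₂ hA₂ h12
    have hi1 := habs1' A₁ hA₁
    have hi2 := habs1' A₂ hA₂
    -- nonpositivity of the inner integral for A₁
    have hnp : ∀ u ∈ Set.Ioi A₁,
        (∫ y in (0:ℝ)..(u - A₁), Real.exp (-Φ * y) * g (y + A₁ - u)) ≤ 0 := by
      intro u hu
      rw [intervalIntegral.integral_of_le (by simp only [Set.mem_Ioi] at hu; linarith)]
      refine setIntegral_nonpos measurableSet_Ioc fun y hy => ?_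
      exact mul_nonpos_of_nonneg_of_nonpos (Real.exp_nonneg _)
        (hgneg _ (by simp only [Set.mem_Ioi] at hu; linarith [hy.2]))
    -- step 1: shrink the domain from Ioi A₁ to Ioi A₂
    have step1 :
        (∫ u in Set.Ioi A₁, (∫ y in (0:ℝ)..(u - A₁), Real.exp (-Φ * y) * g (y + A₁ - u)) ∂ν) ≤
          ∫ u in Set.Ioi A₂, (∫ y in (0:ℝ)..(u - A₁), Real.exp (-Φ * y) * g (y + A₁ - u)) ∂ν := by
      have hneg :
          (∫ u in Set.Ioi A₂,
              -(∫ y in (0:ℝ)..(u - A₁), Real.exp (-Φ * y) * g (y + A₁ - u)) ∂ν) ≤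
            ∫ u in Set.Ioi A₁,
              -(∫ y in (0:ℝ)..(u - A₁), Real.exp (-Φ * y) * g (y + A₁ - u)) ∂ν := by
        refine setIntegral_mono_set hi1.neg ?_ (HasSubset.Subset.eventuallyLE
          (Set.Ioi_subset_Ioi h12))
        filter_upwards [ae_restrict_mem measurableSet_Ioi] with u hu
        simpa using hnp u hu
      simp only [integral_neg] at hneg
      linarith
    -- step 2: pointwise comparison on Ioi A₂
    have step2 :
        (∫ u in Set.Ioi A₂, (∫ y in (0:ℝ)..(u - A₁), Real.exp (-Φ * y) * g (y + A₁ - u)) ∂ν) ≤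
          ∫ u in Set.Ioi A₂, (∫ y in (0:ℝ)..(u - A₂), Real.exp (-Φ * y) * g (y + A₂ - u)) ∂ν := by
      refine setIntegral_mono_on (hi1.mono_set (Set.Ioi_subset_Ioi h12)) hi2
        measurableSet_Ioi fun u hu => ?_
      simp only [Set.mem_Ioi] at hu
      rw [hrw A₁ u, hrw A₂ u]
      exact psi0_aux_J_anti Φ g hΦ hgm hgneg hgmono (by linarith) (by linarith)
    linarith
  -- the second term is monotone, strictly if h is strictly monotone
  have hT2 : ∀ A₁ ∈ Set.Ioi (0:ℝ), ∀ A₂ ∈ Set.Ioi (0:ℝ), A₁ ≤ A₂ →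
      (∫ y in Set.Ioi (0:ℝ), Real.exp (-Φ * y) * h (y + A₁)) ≤
        ∫ y in Set.Ioi (0:ℝ), Real.exp (-Φ * y) * h (y + A₂) := by
    intro A₁ hA₁ A₂ hA₂ h12
    refine setIntegral_mono_on (habs2 A₁ hA₁) (habs2 A₂ hA₂) measurableSet_Ioi fun y _ => ?_
    exact mul_le_mul_of_nonneg_left (hhmono (by linarith)) (Real.exp_nonneg _)
  have hmono : MonotoneOn (Psi0 ν Φ g h) (Set.Ioi 0) := by
    intro A₁ hA₁ A₂ hA₂ h12
    exact add_le_add (hT1 A₁ hA₁ A₂ hA₂ h12) (hT2 A₁ hA₁ A₂ hA₂ h12)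
  refine ⟨hmono, fun hstrict => ?_⟩
  have hT2s : ∀ A₁ ∈ Set.Ioi (0:ℝ), ∀ A₂ ∈ Set.Ioi (0:ℝ), A₁ < A₂ →
      (∫ y in Set.Ioi (0:ℝ), Real.exp (-Φ * y) * h (y + A₁)) <
        ∫ y in Set.Ioi (0:ℝ), Real.exp (-Φ * y) * h (y + A₂) := by
    intro A₁ hA₁ A₂ hA₂ h12
    have hint : IntegrableOn
        (fun y => Real.exp (-Φ * y) * h (y + A₂) - Real.exp (-Φ * y) * h (y + A₁))
        (Set.Ioi 0) volume := (habs2 A₂ hA₂).sub (habs2 A₁ hA₁)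
    have hd : ∀ y : ℝ, 0 < Real.exp (-Φ * y) * h (y + A₂) - Real.exp (-Φ * y) * h (y + A₁) := by
      intro y
      have := hstrict (show y + A₁ < y + A₂ by linarith)
      have he := Real.exp_pos (-Φ * y)
      nlinarith
    have hpos : 0 < ∫ y in Set.Ioi (0:ℝ),
        (Real.exp (-Φ * y) * h (y + A₂) - Real.exp (-Φ * y) * h (y + A₁)) := by
      rw [setIntegral_pos_iff_support_of_nonneg_ae
        (ae_of_all _ fun y => (hd y).le) hint]
      have hsupp : Function.support
          (fun y => Real.exp (-Φ * y) * h (y + A₂) - Real.exp (-Φ * y) * h (y + A₁)) = Set.univ :=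
        Set.eq_univ_of_forall fun y => ne_of_gt (hd y)
      rw [hsupp, Set.univ_inter]
      simp
    have := integral_sub ((habs2 A₂ hA₂)) ((habs2 A₁ hA₁))
    rw [this] at hpos
    linarith
  have hsm : StrictMonoOn (Psi0 ν Φ g h) (Set.Ioi 0) := by
    intro A₁ hA₁ A₂ hA₂ h12
    exact add_lt_add_of_le_of_lt (hT1 A₁ hA₁ A₂ hA₂ h12.le) (hT2s A₁ hA₁ A₂ hA₂ h12)
  refine ⟨hsm, fun A₁ hA₁ A₂ hA₂ e₁ e₂ => ?_⟩
  exact hsm.injOn hA₁ hA₂ (by rw [e₁, e₂])
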